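/- arXiv:2308.12273 — 2 statements merged into one kernel-verified Lean document; each statement's English description precedes it below -/
import Mathlib

section
/- Let (G,φ) be a weighted graph, let r > 0, let u,v ∈ V(G), and let (H,φ') = (G,φ,r). For every real number k ≥ 0, there exists a path in G between u and v with length k in (G,φ) if and only if there exists a path in H between u and v with length k in (H,φ'). In particular, d_{(G,φ)}(u,v) = d_{(H,φ')}(u,v). -/
open scoped ENNReal

/-- The length of a walk in an edge-weighted graph: the sum of the weights of its edges. -/
def walkLen {V : Type} {G : SimpleGraph V} (w : Sym2 V → ℝ) {x y : V} (p : G.Walk x y) : ℝ :=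
  (p.edges.map w).sum

/-- The distance between two vertices of an edge-weighted graph: the infimum of the lengths
of paths between them (`⊤` if there is no such path). -/
noncomputable def wDist {V : Type} (G : SimpleGraph V) (w : Sym2 V → ℝ) (x y : V) : ℝ≥0∞ :=
  ⨅ q : {q : G.Walk x y // q.IsPath}, ENNReal.ofReal (walkLen w q.1)

lemma wDist_comm {V : Type} (G : SimpleGraph V) (w : Sym2 V → ℝ) (x y : V) :
    wDist G w x y = wDist G w y x := by
  have key : ∀ a b : V, wDist G w a b ≤ wDist G w b a := by
    intro a b
    refine le_iInf fun q => ?_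
    refine iInf_le_of_le ⟨q.1.reverse, q.2.reverse⟩ ?_
    simp [walkLen, List.sum_reverse]
  exact le_antisymm (key x y) (key y x)

/-- The power graph: two distinct vertices are adjacent iff their weighted distance
is at most `r`. -/
noncomputable def powerGraph {V : Type} (G : SimpleGraph V) (w : Sym2 V → ℝ) (r : ℝ) :
    SimpleGraph V where
  Adj x y := x ≠ y ∧ wDist G w x y ≤ ENNReal.ofReal r
  symm := ⟨by
    rintro x y ⟨hne, hle⟩
    exact ⟨hne.symm, by rwa [wDist_comm]⟩⟩
  loopless := ⟨fun x h => h.1 rfl⟩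

/-- The unit-length (hop) distance in an unweighted graph. -/
noncomputable def hopDist {V : Type} (L : SimpleGraph V) (x y : V) : ℝ≥0∞ :=
  ⨅ q : L.Walk x y, (q.length : ℝ≥0∞)

/-- Same-colour adjacency within a vertex set `A`. -/
def colorGraph {V : Type} (K : SimpleGraph V) (A : Set V) {m : ℕ} (c : V → Fin m) :
    SimpleGraph V where
  Adj x y := K.Adj x y ∧ x ∈ A ∧ y ∈ A ∧ c x = c y
  symm := ⟨by
    rintro x y ⟨h, hx, hy, hc⟩
    exact ⟨h.symm, hy, hx, hc.symm⟩⟩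
  loopless := ⟨fun x h => K.loopless.irrefl x h.1⟩

/-- The colouring `c` of the subgraph of `K` induced on `A` has weak diameter, measured by the
hop distance of `L`, at most `N`: any two vertices of a monochromatic component of `K ↾ A` are
at hop distance at most `N` in `L`. -/
def HasWeakDiamLE {V : Type} (K : SimpleGraph V) (A : Set V) (L : SimpleGraph V) {m : ℕ}
    (c : V → Fin m) (N : ℝ) : Prop :=
  ∀ x ∈ A, ∀ y ∈ A, (colorGraph K A c).Reachable x y → hopDist L x y ≤ ENNReal.ofReal N

/-- `nbhd G w r S`: vertices joined to `S` by a path of weighted length at most `r`. -/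
def nbhd {V : Type} (G : SimpleGraph V) (w : Sym2 V → ℝ) (r : ℝ) (S : Set V) : Set V :=
  {v | ∃ s ∈ S, ∃ q : G.Walk v s, q.IsPath ∧ walkLen w q ≤ r}

/-- Deleting a set of vertices (keeping them as isolated vertices of the ambient type). -/
def delVerts {V : Type} (G : SimpleGraph V) (Z : Set V) : SimpleGraph V where
  Adj x y := G.Adj x y ∧ x ∉ Z ∧ y ∉ Z
  symm := ⟨by
    rintro x y ⟨h, hx, hy⟩
    exact ⟨h.symm, hy, hx⟩⟩
  loopless := ⟨fun x h => G.loopless.irrefl x h.1⟩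

/-- A weighted graph: a finite simple graph together with positive edge weights. -/
structure WGraph : Type 1 where
  V : Type
  fin : Finite V
  G : SimpleGraph V
  w : Sym2 V → ℝ
  pos : ∀ e ∈ G.edgeSet, 0 < w e

/-- The extended metric on the vertex set of a weighted graph. -/
noncomputable def WGraph.dist (W : WGraph) : W.V → W.V → ℝ≥0∞ := wDist W.G W.w

/-- All edge weights lie in `(0, ℓ]`. -/
def WGraph.IsBounded (W : WGraph) (ℓ : ℝ) : Prop := ∀ e ∈ W.G.edgeSet, W.w e ≤ ℓ

/-- `f` is an `n`-dimensional control function for the extended metric `d`. -/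
def IsControlOn {X : Type} (d : X → X → ℝ≥0∞) (n : ℕ) (f : ℝ → ℝ) : Prop :=
  ∀ r : ℝ, 0 < r → ∃ U : Fin (n + 1) → Set (Set X),
    (∀ x : X, ∃ i, ∃ s ∈ U i, x ∈ s) ∧
    (∀ i, ∀ s ∈ U i, ∀ t ∈ U i, s ≠ t → ∀ x ∈ s, ∀ y ∈ t, ENNReal.ofReal r < d x y) ∧
    (∀ i, ∀ s ∈ U i, ∀ x ∈ s, ∀ y ∈ s, d x y ≤ ENNReal.ofReal (f r))

/-- The asymptotic dimension of a class of weighted graphs is at most `n`. -/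
def asdimLE (F : Set WGraph) (n : ℕ) : Prop :=
  ∃ f : ℝ → ℝ, (∀ x, 0 < x → 0 < f x) ∧ ∀ W ∈ F, IsControlOn W.dist n f

/-- The Assouad–Nagata dimension of a class of weighted graphs is at most `n`:
some dilation is a common `n`-dimensional control function. -/
def ANdimLE (F : Set WGraph) (n : ℕ) : Prop :=
  ∃ (f : ℝ → ℝ) (c : ℝ), 0 < c ∧ (∀ x, 0 < x → 0 < f x) ∧ (∀ x, 0 < x → f x ≤ c * x) ∧
    ∀ W ∈ F, IsControlOn W.dist n f

/-- `H` is a minor of `G`: there are pairwise disjoint nonempty connected branch sets in `G`,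
one for each vertex of `H`, with branch sets of adjacent vertices joined by an edge. -/
def IsMinorOf {α β : Type} (H : SimpleGraph β) (G : SimpleGraph α) : Prop :=
  ∃ B : β → Set α,
    (∀ h, (B h).Nonempty) ∧
    (∀ h h', h ≠ h' → Disjoint (B h) (B h')) ∧
    (∀ h, (G.induce (B h)).Connected) ∧
    (∀ h h', H.Adj h h' → ∃ a ∈ B h, ∃ b ∈ B h', G.Adj a b)
/-- Vertices of the refinement `(G,w,r)`: original vertices plus, for each edge `e = xy` of `G`
and each end `x`, internal vertices `(x,y,i)`, `1 ≤ i ≤ ⌈w(e)/r⌉ - 1`, of the path `P_{e,x}`. -/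
abbrev SubVert {V : Type} (G : SimpleGraph V) (w : Sym2 V → ℝ) (r : ℝ) : Type :=
  V ⊕ {p : V × V × ℕ // G.Adj p.1 p.2.1 ∧ 1 ≤ p.2.2 ∧ p.2.2 ≤ ⌈w s(p.1, p.2.1) / r⌉₊ - 1}

def subRel {V : Type} (G : SimpleGraph V) (w : Sym2 V → ℝ) (r : ℝ) :
    SubVert G w r → SubVert G w r → Prop
  | Sum.inl x, Sum.inl y => G.Adj x y ∧ ⌈w s(x, y) / r⌉₊ = 1
  | Sum.inl x, Sum.inr q => (x = q.1.1 ∧ q.1.2.2 = 1) ∨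
      (x = q.1.2.1 ∧ q.1.2.2 = ⌈w s(q.1.1, q.1.2.1) / r⌉₊ - 1)
  | Sum.inr _, Sum.inl _ => False
  | Sum.inr p, Sum.inr q => p.1.1 = q.1.1 ∧ p.1.2.1 = q.1.2.1 ∧ q.1.2.2 = p.1.2.2 + 1

/-- The underlying graph of the refinement `(G,w,r)`: each edge `e = xy` is replaced by two
internally disjoint paths `P_{e,x}`, `P_{e,y}` between `x` and `y` with `⌈w(e)/r⌉` edges
(which degenerate to the single original edge when `⌈w(e)/r⌉ = 1`). -/
def subGraph {V : Type} (G : SimpleGraph V) (w : Sym2 V → ℝ) (r : ℝ) :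
    SimpleGraph (SubVert G w r) :=
  SimpleGraph.fromRel (subRel G w r)

/-- The edge weights of the refinement `(G,w,r)`: in `P_{e,x}` the edge incident with `x` has
weight `w(e) - r·(⌈w(e)/r⌉ - 1)` and all other edges have weight `r`. -/
noncomputable def subW {V : Type} (G : SimpleGraph V) (w : Sym2 V → ℝ) (r : ℝ) :
    Sym2 (SubVert G w r) → ℝ :=
  letI : DecidableEq V := Classical.decEq V
  Sym2.lift ⟨fun a b =>
    match a, b with
    | Sum.inl x, Sum.inl y => w s(x, y)
    | Sum.inl x, Sum.inr q =>
        if x = q.1.1 ∧ q.1.2.2 = 1 then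
          w s(q.1.1, q.1.2.1) - r * ((⌈w s(q.1.1, q.1.2.1) / r⌉₊ - 1 : ℕ) : ℝ)
        else r
    | Sum.inr q, Sum.inl x =>
        if x = q.1.1 ∧ q.1.2.2 = 1 then
          w s(q.1.1, q.1.2.1) - r * ((⌈w s(q.1.1, q.1.2.1) / r⌉₊ - 1 : ℕ) : ℝ)
        else r
    | Sum.inr _, Sum.inr _ => r, by
      rintro (x | p) (y | q)
      · show w s(x, y) = w s(y, x)
        rw [Sym2.eq_swap]
      · rfl
      · rfl
      · rfl⟩

/-- The power graph `(G,w)^r`, whose vertex set is the vertex set of the refinement `(G,w,r)`,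
two distinct vertices being adjacent iff their distance in `(G,w,r)` is at most `r`. -/
noncomputable def subPower {V : Type} (G : SimpleGraph V) (w : Sym2 V → ℝ) (r : ℝ) :
    SimpleGraph (SubVert G w r) :=
  powerGraph (subGraph G w r) (subW G w r) r
namespace LengthSubdiv

open SimpleGraph Walk

variable {V : Type} {G : SimpleGraph V} {w : Sym2 V → ℝ} {r : ℝ}

lemma walkLen_nil {x : V} : walkLen w (Walk.nil : G.Walk x x) = 0 := rfl

lemma walkLen_cons {x y z : V} (h : G.Adj x y) (p : G.Walk y z) :
    walkLen w (Walk.cons h p) = w s(x, y) + walkLen w p := by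
  simp [walkLen]

lemma walkLen_append {x y z : V} (p : G.Walk x y) (q : G.Walk y z) :
    walkLen w (p.append q) = walkLen w p + walkLen w q := by
  simp [walkLen]

lemma subW_inl_inl (x y : V) :
    subW G w r s(Sum.inl x, Sum.inl y) = w s(x, y) := by
  simp only [subW, Sym2.lift_mk]

lemma subW_inr_inr (c d) :
    subW G w r s(Sum.inr c, Sum.inr d) = r := by
  simp only [subW, Sym2.lift_mk]

lemma subW_inl_inr_pos (x : V) (c) (h1 : x = c.1.1) (h2 : c.1.2.2 = 1) :
    subW G w r s(Sum.inl x, Sum.inr c)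
      = w s(c.1.1, c.1.2.1) - r * ((⌈w s(c.1.1, c.1.2.1) / r⌉₊ - 1 : ℕ) : ℝ) := by
  simp only [subW, Sym2.lift_mk]
  rw [if_pos ⟨h1, h2⟩]

lemma subW_inl_inr_neg (x : V) (c) (h : ¬(x = c.1.1 ∧ c.1.2.2 = 1)) :
    subW G w r s(Sum.inl x, Sum.inr c) = r := by
  simp only [subW, Sym2.lift_mk]
  rw [if_neg h]

lemma subW_inr_inl_pos (x : V) (c) (h1 : x = c.1.1) (h2 : c.1.2.2 = 1) :
    subW G w r s(Sum.inr c, Sum.inl x)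
      = w s(c.1.1, c.1.2.1) - r * ((⌈w s(c.1.1, c.1.2.1) / r⌉₊ - 1 : ℕ) : ℝ) := by
  rw [Sym2.eq_swap]; exact subW_inl_inr_pos x c h1 h2

lemma subW_inr_inl_neg (x : V) (c) (h : ¬(x = c.1.1 ∧ c.1.2.2 = 1)) :
    subW G w r s(Sum.inr c, Sum.inl x) = r := by
  rw [Sym2.eq_swap]; exact subW_inl_inr_neg x c h

lemma subGraph_adj_iff (a b : SubVert G w r) :
    (subGraph G w r).Adj a b ↔ a ≠ b ∧ (subRel G w r a b ∨ subRel G w r b a) :=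
  SimpleGraph.fromRel_adj _ a b
lemma adj_inl_inl {x y : V} (h : G.Adj x y) (hn : ⌈w s(x,y) / r⌉₊ = 1) :
    (subGraph G w r).Adj (Sum.inl x) (Sum.inl y) := by
  rw [subGraph_adj_iff]
  exact ⟨by simp [h.ne], Or.inl ⟨h, hn⟩⟩

lemma adj_of_inl_inl {x y : V} (h : (subGraph G w r).Adj (Sum.inl x) (Sum.inl y)) :
    G.Adj x y := by
  rw [subGraph_adj_iff] at h
  rcases h.2 with ⟨ha, _⟩ | ⟨ha, _⟩
  · exact ha
  · exact ha.symm

lemma adj_inl_first {x y : V} (h : G.Adj x y) (hn : 2 ≤ ⌈w s(x,y) / r⌉₊) :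
    (subGraph G w r).Adj (Sum.inl x) (Sum.inr ⟨(x, y, 1), h, le_rfl, by dsimp only; omega⟩) := by
  rw [subGraph_adj_iff]
  exact ⟨by simp, Or.inl (Or.inl ⟨rfl, rfl⟩)⟩

lemma adj_step {x y : V} {i : ℕ} (hc : G.Adj x y ∧ 1 ≤ i ∧ i ≤ ⌈w s(x,y) / r⌉₊ - 1)
    (hc' : G.Adj x y ∧ 1 ≤ i + 1 ∧ i + 1 ≤ ⌈w s(x,y) / r⌉₊ - 1) :
    (subGraph G w r).Adj (Sum.inr ⟨(x, y, i), hc⟩) (Sum.inr ⟨(x, y, i + 1), hc'⟩) := by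
  rw [subGraph_adj_iff]
  refine ⟨?_, Or.inl ⟨rfl, rfl, rfl⟩⟩
  simp only [ne_eq, Sum.inr.injEq, Subtype.mk.injEq, Prod.mk.injEq]
  omega

lemma adj_last {x y : V} {i : ℕ} (hc : G.Adj x y ∧ 1 ≤ i ∧ i ≤ ⌈w s(x,y) / r⌉₊ - 1)
    (hi : i + 1 = ⌈w s(x,y) / r⌉₊) :
    (subGraph G w r).Adj (Sum.inr ⟨(x, y, i), hc⟩) (Sum.inl y) := by
  rw [subGraph_adj_iff]
  exact ⟨by simp, Or.inr (Or.inr ⟨rfl, by dsimp only; omega⟩)⟩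

lemma adj_inl_inr_cases {a x y : V} {i : ℕ} {hc : G.Adj x y ∧ 1 ≤ i ∧ i ≤ ⌈w s(x,y) / r⌉₊ - 1}
    (h : (subGraph G w r).Adj (Sum.inl a) (Sum.inr ⟨(x, y, i), hc⟩)) :
    (a = x ∧ i = 1) ∨ (a = y ∧ i + 1 = ⌈w s(x,y) / r⌉₊) := by
  rw [subGraph_adj_iff] at h
  rcases h.2 with (⟨h1, h2⟩ | ⟨h1, h2⟩) | h'
  · exact Or.inl ⟨h1, h2⟩
  · refine Or.inr ⟨h1, ?_⟩
    dsimp only at h2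
    obtain ⟨_, ha, hb⟩ := hc; omega
  · exact h'.elim

lemma adj_inr_cases {x y : V} {i : ℕ} {hc : G.Adj x y ∧ 1 ≤ i ∧ i ≤ ⌈w s(x,y) / r⌉₊ - 1}
    {b : SubVert G w r} (h : (subGraph G w r).Adj (Sum.inr ⟨(x, y, i), hc⟩) b) :
    (b = Sum.inl x ∧ i = 1) ∨ (b = Sum.inl y ∧ i + 1 = ⌈w s(x,y) / r⌉₊) ∨
    (∃ hc', b = Sum.inr ⟨(x, y, i + 1), hc'⟩) ∨
    (∃ j hc', i = j + 1 ∧ b = Sum.inr ⟨(x, y, j), hc'⟩) := by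
  rw [subGraph_adj_iff] at h
  obtain ⟨hne, hrel⟩ := h
  cases b with
  | inl z =>
    rcases hrel with h' | (⟨h1, h2⟩ | ⟨h1, h2⟩)
    · exact h'.elim
    · subst h1; exact Or.inl ⟨rfl, h2⟩
    · subst h1
      refine Or.inr (Or.inl ⟨rfl, ?_⟩)
      dsimp only at h2
      obtain ⟨_, ha, hb⟩ := hc; omega
  | inr d =>
    obtain ⟨⟨dx, dy, dj⟩, hd⟩ := d
    rcases hrel with ⟨h1, h2, h3⟩ | ⟨h1, h2, h3⟩
    · dsimp at h1 h2 h3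
      subst h1; subst h2; subst h3
      exact Or.inr (Or.inr (Or.inl ⟨hd, rfl⟩))
    · dsimp at h1 h2 h3
      subst h1; subst h2
      exact Or.inr (Or.inr (Or.inr ⟨dj, hd, h3, rfl⟩))
/-- Ascending traversal construction: from internal vertex `(x,y,i)` to `inl y`. -/
lemma exists_buildUp {x y : V} (hxy : G.Adj x y) :
    ∀ (j i : ℕ) (h1 : 1 ≤ i) (hij : i + j + 1 = ⌈w s(x,y) / r⌉₊)
      (hc : G.Adj x y ∧ 1 ≤ i ∧ i ≤ ⌈w s(x,y) / r⌉₊ - 1),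
    ∃ q : (subGraph G w r).Walk (Sum.inr ⟨(x, y, i), hc⟩) (Sum.inl y),
      q.IsPath ∧ walkLen (subW G w r) q = r * (j + 1) ∧
      ∀ z ∈ q.support, z = Sum.inl y ∨
        ∃ t hc', i ≤ t ∧ z = (Sum.inr ⟨(x, y, t), hc'⟩ : SubVert G w r) := by
  intro j
  induction j with
  | zero =>
    intro i h1 hij hc
    refine ⟨Walk.cons (adj_last hc (by omega)) Walk.nil, ?_, ?_, ?_⟩
    · simp [Walk.cons_isPath_iff]
    · rw [walkLen_cons, walkLen_nil, subW_inr_inl_neg]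
      · push_cast; ring
      · rintro ⟨h', _⟩
        exact hxy.ne' h'
    · intro z hz
      simp only [Walk.support_cons, Walk.support_nil, List.mem_cons,
        List.mem_singleton] at hz
      rcases hz with rfl | rfl | h'
      · exact Or.inr ⟨i, hc, le_rfl, rfl⟩
      · exact Or.inl rfl
      · exact absurd h' List.not_mem_nil
  | succ j ih =>
    intro i h1 hij hc
    have hc' : G.Adj x y ∧ 1 ≤ i + 1 ∧ i + 1 ≤ ⌈w s(x,y) / r⌉₊ - 1 := ⟨hxy, by omega, by omega⟩
    obtain ⟨q, hq, hlen, hsupp⟩ := ih (i + 1) (by omega) (by omega) hc'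
    refine ⟨Walk.cons (adj_step hc hc') q, ?_, ?_, ?_⟩
    · rw [Walk.cons_isPath_iff]
      refine ⟨hq, fun hmem => ?_⟩
      rcases hsupp _ hmem with h' | ⟨t, hct, hit, h'⟩
      · cases h'
      · rw [Sum.inr.injEq, Subtype.mk.injEq, Prod.mk.injEq, Prod.mk.injEq] at h'
        omega
    · rw [walkLen_cons, hlen, subW_inr_inr]
      push_cast; ring
    · intro z hz
      rw [Walk.support_cons, List.mem_cons] at hz
      rcases hz with rfl | hz
      · exact Or.inr ⟨i, hc, le_rfl, rfl⟩
      · rcases hsupp _ hz with h' | ⟨t, hct, hit, h'⟩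
        · exact Or.inl h'
        · exact Or.inr ⟨t, hct, by omega, h'⟩

/-- Replacement path for a single edge: a path from `inl x` to `inl y` of length `w s(x,y)`. -/
lemma exists_edgeWalk {x y : V} (hxy : G.Adj x y) (hn : 1 ≤ ⌈w s(x,y) / r⌉₊) :
    ∃ q : (subGraph G w r).Walk (Sum.inl x) (Sum.inl y),
      q.IsPath ∧ walkLen (subW G w r) q = w s(x, y) ∧
      ∀ z ∈ q.support, z = Sum.inl x ∨ z = Sum.inl y ∨
        ∃ t hc', z = (Sum.inr ⟨(x, y, t), hc'⟩ : SubVert G w r) := by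
  rcases hN : ⌈w s(x,y) / r⌉₊ with _ | _ | m
  · omega
  · refine ⟨Walk.cons (adj_inl_inl hxy hN) Walk.nil, ?_, ?_, ?_⟩
    · simp [Walk.cons_isPath_iff, hxy.ne]
    · rw [walkLen_cons, walkLen_nil, subW_inl_inl]; ring
    · intro z hz
      simp only [Walk.support_cons, Walk.support_nil, List.mem_cons,
        List.mem_singleton] at hz
      rcases hz with rfl | rfl | h'
      · exact Or.inl rfl
      · exact Or.inr (Or.inl rfl)
      · exact absurd h' List.not_mem_nil
  · have h2 : 2 ≤ ⌈w s(x,y) / r⌉₊ := by omega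
    have hc : G.Adj x y ∧ 1 ≤ 1 ∧ 1 ≤ ⌈w s(x,y) / r⌉₊ - 1 := ⟨hxy, le_rfl, by omega⟩
    obtain ⟨q, hq, hlen, hsupp⟩ := exists_buildUp hxy m 1 le_rfl (by omega) hc
    refine ⟨Walk.cons (adj_inl_first hxy h2) q, ?_, ?_, ?_⟩
    · rw [Walk.cons_isPath_iff]
      refine ⟨hq, fun hmem => ?_⟩
      rcases hsupp _ hmem with h' | ⟨t, hct, hit, h'⟩
      · rw [Sum.inl.injEq] at h'
        exact hxy.ne h'
      · cases h'
    · rw [walkLen_cons, hlen, subW_inl_inr_pos x _ rfl rfl]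
      dsimp only
      rw [hN]
      push_cast
      ring
    · intro z hz
      rw [Walk.support_cons, List.mem_cons] at hz
      rcases hz with rfl | hz
      · exact Or.inl rfl
      · rcases hsupp _ hz with h' | ⟨t, hct, _, h'⟩
        · exact Or.inr (Or.inl h')
        · exact Or.inr (Or.inr ⟨t, hct, h'⟩)
/-- Lifting a path of `G` to the subdivision. -/
lemma exists_lift (hr : 0 < r) (hpos : ∀ e ∈ G.edgeSet, 0 < w e) {a b : V}
    (p : G.Walk a b) (hp : p.IsPath) :
    ∃ q : (subGraph G w r).Walk (Sum.inl a) (Sum.inl b),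
      q.IsPath ∧ walkLen (subW G w r) q = walkLen w p ∧
      ∀ z ∈ q.support,
        (∃ c ∈ p.support, z = Sum.inl c) ∨
        (∃ x y t hc', z = (Sum.inr ⟨(x, y, t), hc'⟩ : SubVert G w r) ∧ s(x, y) ∈ p.edges) := by
  induction p with
  | nil =>
    refine ⟨Walk.nil, Walk.IsPath.nil, by simp [walkLen_nil], ?_⟩
    intro z hz
    simp only [Walk.support_nil, List.mem_singleton] at hz
    subst hz
    exact Or.inl ⟨_, by simp, rfl⟩
  | @cons x y b hxy p ih =>
    rw [Walk.cons_isPath_iff] at hp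
    obtain ⟨q₂, hq₂, hlen₂, hsupp₂⟩ := ih hp.1
    have hn : 1 ≤ ⌈w s(x,y) / r⌉₊ := by
      rw [Nat.one_le_ceil_iff]
      exact div_pos (hpos _ (G.mem_edgeSet.mpr hxy)) hr
    obtain ⟨q₁, hq₁, hlen₁, hsupp₁⟩ := exists_edgeWalk hxy hn
    refine ⟨q₁.append q₂, ?_, ?_, ?_⟩
    · rw [Walk.isPath_def, Walk.support_append]
      refine List.Nodup.append ((Walk.isPath_def _).mp hq₁)
        (((Walk.isPath_def _).mp hq₂).tail) ?_
      intro z hz1 hz2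
      have hz2' : z ∈ q₂.support := List.mem_of_mem_tail hz2
      rcases hsupp₁ _ hz1 with rfl | rfl | ⟨t, hct, rfl⟩
      · rcases hsupp₂ _ hz2' with ⟨c, hcmem, hc⟩ | ⟨x', y', t, hc', hc, _⟩
        · rw [Sum.inl.injEq] at hc
          subst hc
          exact hp.2 hcmem
        · cases hc
      · have : q₂.support = Sum.inl y :: q₂.support.tail := Walk.support_eq_cons q₂
        have hnd := (Walk.isPath_def _).mp hq₂
        rw [this, List.nodup_cons] at hnd
        exact hnd.1 hz2
      · rcases hsupp₂ _ hz2' with ⟨c, hcmem, hc⟩ | ⟨x', y', t', hc', hc, hedge⟩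
        · cases hc
        · rw [Sum.inr.injEq, Subtype.mk.injEq, Prod.mk.injEq, Prod.mk.injEq] at hc
          obtain ⟨hx', hy', _⟩ := hc
          subst hx'; subst hy'
          exact hp.2 (Walk.fst_mem_support_of_mem_edges p hedge)
    · rw [walkLen_append, hlen₁, hlen₂, walkLen_cons]
    · intro z hz
      rw [Walk.support_append, List.mem_append] at hz
      rcases hz with hz | hz
      · rcases hsupp₁ _ hz with rfl | rfl | ⟨t, hct, rfl⟩
        · exact Or.inl ⟨x, by simp, rfl⟩
        · exact Or.inl ⟨y, by simp, rfl⟩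
        · exact Or.inr ⟨x, y, t, hct, rfl, by simp⟩
      · rcases hsupp₂ _ (List.mem_of_mem_tail hz) with ⟨c, hcmem, hc⟩ | ⟨x', y', t, hc', hc, he⟩
        · exact Or.inl ⟨c, by simp [hcmem], hc⟩
        · exact Or.inr ⟨x', y', t, hc', hc, by simp [he]⟩
/-- Forced ascending traversal: a path starting at internal vertex `(x,y,i)` that does not go
backwards must climb to `inl y`. -/
lemma travUp {v : V} {x y : V} :
    ∀ (j i : ℕ) (h1 : 1 ≤ i) (hij : i + j + 1 = ⌈w s(x,y) / r⌉₊)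
      (hc : G.Adj x y ∧ 1 ≤ i ∧ i ≤ ⌈w s(x,y) / r⌉₊ - 1)
      (q : (subGraph G w r).Walk (Sum.inr ⟨(x, y, i), hc⟩) (Sum.inl v)) (hq : q.IsPath)
      (hbx : i = 1 → Sum.inl x ∉ q.support)
      (hbd : ∀ (j' : ℕ) hc', i = j' + 1 →
        (Sum.inr ⟨(x, y, j'), hc'⟩ : SubVert G w r) ∉ q.support),
    ∃ q' : (subGraph G w r).Walk (Sum.inl y) (Sum.inl v), q'.IsPath ∧
      walkLen (subW G w r) q = r * (j + 1) + walkLen (subW G w r) q' ∧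
      q'.length + (j + 1) = q.length ∧
      ∀ z ∈ q'.support, z ∈ q.support := by
  intro j
  induction j with
  | zero =>
    intro i h1 hij hc q hq hbx hbd
    cases q with
    | @cons _ b _ h q₂ =>
      have hbmem : b ∈ (Walk.cons h q₂).support := by
        rw [Walk.support_cons]; exact List.mem_cons_of_mem _ q₂.start_mem_support
      rcases adj_inr_cases h with ⟨rfl, hi1⟩ | ⟨rfl, hiN⟩ | ⟨hc', rfl⟩ | ⟨j', hc', hij', rfl⟩
      · exact absurd hbmem (hbx hi1)
      · refine ⟨q₂, hq.of_cons, ?_, ?_, ?_⟩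
        · rw [walkLen_cons, subW_inr_inl_neg]
          · push_cast; ring
          · rintro ⟨h', _⟩
            exact hc.1.ne' h'
        · simp [Walk.length_cons]
        · intro z hz
          rw [Walk.support_cons]; exact List.mem_cons_of_mem _ hz
      · obtain ⟨_, _, h3⟩ := hc'
        dsimp only at h3
        omega
      · exact absurd hbmem (hbd j' hc' hij')
  | succ j ih =>
    intro i h1 hij hc q hq hbx hbd
    cases q with
    | @cons _ b _ h q₂ =>
      have hbmem : b ∈ (Walk.cons h q₂).support := by
        rw [Walk.support_cons]; exact List.mem_cons_of_mem _ q₂.start_mem_support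
      rcases adj_inr_cases h with ⟨rfl, hi1⟩ | ⟨rfl, hiN⟩ | ⟨hc', rfl⟩ | ⟨j', hc', hij', rfl⟩
      · exact absurd hbmem (hbx hi1)
      · omega
      · have hq₂ := ((Walk.cons_isPath_iff _ _).mp hq)
        obtain ⟨q', hq', hlen, hL, hsub⟩ := ih (i + 1) (by omega) (by omega) hc' q₂ hq₂.1
          (fun h' => absurd h' (by omega))
          (by
            intro j'' hc'' he hmem
            have : j'' = i := by omega
            subst this
            exact hq₂.2 hmem)
        refine ⟨q', hq', ?_, ?_, ?_⟩
        · rw [walkLen_cons, subW_inr_inr, hlen]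
          push_cast; ring
        · rw [Walk.length_cons]; omega
        · intro z hz
          rw [Walk.support_cons]; exact List.mem_cons_of_mem _ (hsub z hz)
      · exact absurd hbmem (hbd j' hc' hij')

/-- Forced descending traversal: a path starting at internal vertex `(x,y,j+1)` that does not
go upwards must descend to `inl x`. -/
lemma travDown {v : V} {x y : V} :
    ∀ (j : ℕ) (hc : G.Adj x y ∧ 1 ≤ j + 1 ∧ j + 1 ≤ ⌈w s(x,y) / r⌉₊ - 1)
      (q : (subGraph G w r).Walk (Sum.inr ⟨(x, y, j + 1), hc⟩) (Sum.inl v)) (hq : q.IsPath)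
      (hby : j + 2 = ⌈w s(x,y) / r⌉₊ → Sum.inl y ∉ q.support)
      (hbu : ∀ hc', (Sum.inr ⟨(x, y, j + 2), hc'⟩ : SubVert G w r) ∉ q.support),
    ∃ q' : (subGraph G w r).Walk (Sum.inl x) (Sum.inl v), q'.IsPath ∧
      walkLen (subW G w r) q =
        r * j + (w s(x, y) - r * ((⌈w s(x,y) / r⌉₊ - 1 : ℕ) : ℝ)) + walkLen (subW G w r) q' ∧
      q'.length + (j + 1) = q.length ∧
      ∀ z ∈ q'.support, z ∈ q.support := by
  intro j
  induction j with
  | zero =>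
    intro hc q hq hby hbu
    cases q with
    | @cons _ b _ h q₂ =>
      have hbmem : b ∈ (Walk.cons h q₂).support := by
        rw [Walk.support_cons]; exact List.mem_cons_of_mem _ q₂.start_mem_support
      rcases adj_inr_cases h with ⟨rfl, hi1⟩ | ⟨rfl, hiN⟩ | ⟨hc', rfl⟩ | ⟨j', hc', hij', rfl⟩
      · refine ⟨q₂, hq.of_cons, ?_, ?_, ?_⟩
        · rw [walkLen_cons, subW_inr_inl_pos x _ rfl rfl]
          push_cast; ring
        · simp [Walk.length_cons]
        · intro z hz
          rw [Walk.support_cons]; exact List.mem_cons_of_mem _ hz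
      · exact absurd hbmem (hby (by omega))
      · exact absurd hbmem (hbu hc')
      · obtain ⟨_, h2, _⟩ := hc'
        dsimp only at h2
        omega
  | succ j ih =>
    intro hc q hq hby hbu
    cases q with
    | @cons _ b _ h q₂ =>
      have hbmem : b ∈ (Walk.cons h q₂).support := by
        rw [Walk.support_cons]; exact List.mem_cons_of_mem _ q₂.start_mem_support
      rcases adj_inr_cases h with ⟨rfl, hi1⟩ | ⟨rfl, hiN⟩ | ⟨hc', rfl⟩ | ⟨j', hc', hij', rfl⟩
      · omega
      · exact absurd hbmem (hby hiN)
      · exact absurd hbmem (hbu hc')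
      · have hj' : j' = j + 1 := by omega
        subst hj'
        have hq₂ := ((Walk.cons_isPath_iff _ _).mp hq)
        obtain ⟨q', hq', hlen, hL, hsub⟩ := ih hc' q₂ hq₂.1
          (fun h' => absurd h' (by obtain ⟨_, _, h3⟩ := hc; omega))
          (by
            intro hc'' hmem
            exact hq₂.2 hmem)
        refine ⟨q', hq', ?_, ?_, ?_⟩
        · rw [walkLen_cons, subW_inr_inr, hlen]
          push_cast; ring
        · rw [Walk.length_cons]; omega
        · intro z hz
          rw [Walk.support_cons]; exact List.mem_cons_of_mem _ (hsub z hz)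
/-- Projecting a path of the subdivision between original vertices down to `G`. -/
lemma exists_proj :
    ∀ (L : ℕ) {a v : V} (q : (subGraph G w r).Walk (Sum.inl a) (Sum.inl v)),
      q.length = L → q.IsPath →
      ∃ p : G.Walk a v, p.IsPath ∧ walkLen w p = walkLen (subW G w r) q ∧
        ∀ z ∈ p.support, Sum.inl z ∈ q.support := by
  intro L
  induction L using Nat.strong_induction_on with
  | _ L IH =>
  intro a v q hL hq
  cases q with
  | nil =>
    refine ⟨Walk.nil, Walk.IsPath.nil, by simp [walkLen], ?_⟩
    intro z hz
    simp only [Walk.support_nil, List.mem_singleton] at hz ⊢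
    rw [hz]
  | @cons _ b _ h q₂ =>
    have hq₂ := (Walk.cons_isPath_iff _ _).mp hq
    cases b with
    | inl y =>
      obtain ⟨p', hp', hlen', hsupp'⟩ :=
        IH q₂.length (by rw [← hL, Walk.length_cons]; omega) q₂ rfl hq₂.1
      refine ⟨Walk.cons (adj_of_inl_inl h) p', ?_, ?_, ?_⟩
      · rw [Walk.cons_isPath_iff]
        exact ⟨hp', fun hmem => hq₂.2 (hsupp' _ hmem)⟩
      · rw [walkLen_cons, walkLen_cons, subW_inl_inl, hlen']
      · intro z hz
        rw [Walk.support_cons, List.mem_cons] at hz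
        rcases hz with rfl | hz
        · exact Walk.start_mem_support _
        · rw [Walk.support_cons]
          exact List.mem_cons_of_mem _ (hsupp' _ hz)
    | inr c =>
      obtain ⟨⟨x, y, i⟩, hcc⟩ := c
      have hccd : G.Adj x y ∧ 1 ≤ i ∧ i ≤ ⌈w s(x,y) / r⌉₊ - 1 := hcc
      rcases adj_inl_inr_cases h with ⟨rfl, rfl⟩ | ⟨rfl, hiN⟩
      · -- entered at the `x`-end, index 1: climb up to `inl y`
        have h2N : 2 ≤ ⌈w s(a,y) / r⌉₊ := by
          obtain ⟨_, _, h2'⟩ := hccd; omega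
        obtain ⟨q', hq', hlen, hL', hsub⟩ :=
          travUp (⌈w s(a,y) / r⌉₊ - 2) 1 le_rfl (by omega) hccd q₂ hq₂.1
            (fun _ => hq₂.2)
            (by
              intro j' hc' he hmem
              obtain ⟨_, h1', _⟩ := hc'
              dsimp only at h1'
              omega)
        have hlt : q'.length < L := by
          rw [← hL, Walk.length_cons]; omega
        obtain ⟨p', hp', hlenp, hsuppp⟩ := IH q'.length hlt q' rfl hq'
        refine ⟨Walk.cons hccd.1 p', ?_, ?_, ?_⟩
        · rw [Walk.cons_isPath_iff]
          exact ⟨hp', fun hmem => hq₂.2 (hsub _ (hsuppp _ hmem))⟩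
        · rw [walkLen_cons, walkLen_cons, subW_inl_inr_pos a _ rfl rfl, hlen, hlenp]
          dsimp only
          have hcast : ((⌈w s(a,y) / r⌉₊ - 1 : ℕ) : ℝ)
              = ((⌈w s(a,y) / r⌉₊ - 2 : ℕ) : ℝ) + 1 := by
            have : ⌈w s(a,y) / r⌉₊ - 1 = (⌈w s(a,y) / r⌉₊ - 2) + 1 := by omega
            rw [this]; push_cast; ring
          rw [hcast]
          ring
        · intro z hz
          rw [Walk.support_cons, List.mem_cons] at hz
          rcases hz with rfl | hz
          · exact Walk.start_mem_support _
          · rw [Walk.support_cons]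
            exact List.mem_cons_of_mem _ (hsub _ (hsuppp _ hz))
      · -- entered at the `y`-end, index `N - 1`: descend to `inl x`
        obtain ⟨j, rfl⟩ : ∃ j, i = j + 1 := ⟨i - 1, by obtain ⟨_, h1', _⟩ := hccd; omega⟩
        obtain ⟨q', hq', hlen, hL', hsub⟩ :=
          travDown j hccd q₂ hq₂.1
            (fun _ => hq₂.2)
            (by
              intro hc' hmem
              obtain ⟨_, _, h2'⟩ := hc'
              dsimp only at h2'
              omega)
        have hlt : q'.length < L := by
          rw [← hL, Walk.length_cons]; omega
        obtain ⟨p', hp', hlenp, hsuppp⟩ := IH q'.length hlt q' rfl hq'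
        refine ⟨Walk.cons hccd.1.symm p', ?_, ?_, ?_⟩
        · rw [Walk.cons_isPath_iff]
          exact ⟨hp', fun hmem => hq₂.2 (hsub _ (hsuppp _ hmem))⟩
        · rw [walkLen_cons, walkLen_cons, subW_inl_inr_neg, hlen, hlenp]
          · have hsw : w s(a, x) = w s(x, a) := by rw [Sym2.eq_swap]
            have hNj : ⌈w s(x,a) / r⌉₊ - 1 = j + 1 := by omega
            rw [hsw, hNj]
            push_cast
            ring
          · rintro ⟨h', _⟩
            exact hccd.1.ne' h'
        · intro z hz
          rw [Walk.support_cons, List.mem_cons] at hz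
          rcases hz with rfl | hz
          · exact Walk.start_mem_support _
          · rw [Walk.support_cons]
            exact List.mem_cons_of_mem _ (hsub _ (hsuppp _ hz))

end LengthSubdiv

/-- Theorem (Lemma `length_subdiv`): let `(H,φ') = (G,φ,r)`. For every `k ≥ 0`, there is a path
in `G` between `u` and `v` of length `k` in `(G,φ)` iff there is a path in `H` between `u` and
`v` of length `k` in `(H,φ')`. In particular the two distances agree. -/
theorem length_subdiv (W : WGraph) (r : ℝ) (hr : 0 < r) (u v : W.V) :
    (∀ k : ℝ, 0 ≤ k →
      ((∃ p : W.G.Walk u v, p.IsPath ∧ walkLen W.w p = k) ↔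
        (∃ q : (subGraph W.G W.w r).Walk (Sum.inl u) (Sum.inl v),
          q.IsPath ∧ walkLen (subW W.G W.w r) q = k))) ∧
    wDist W.G W.w u v = wDist (subGraph W.G W.w r) (subW W.G W.w r) (Sum.inl u) (Sum.inl v) := by
  constructor
  · intro k _
    constructor
    · rintro ⟨p, hp, rfl⟩
      obtain ⟨q, hq, hlen, -⟩ := LengthSubdiv.exists_lift hr W.pos p hp
      exact ⟨q, hq, hlen⟩
    · rintro ⟨q, hq, rfl⟩
      obtain ⟨p, hp, hlen, -⟩ := LengthSubdiv.exists_proj q.length q rfl hq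
      exact ⟨p, hp, hlen⟩
  · unfold wDist
    apply le_antisymm
    · refine le_iInf fun q => ?_
      obtain ⟨p, hp, hlen, -⟩ := LengthSubdiv.exists_proj q.1.length q.1 rfl q.2
      exact iInf_le_of_le ⟨p, hp⟩ (le_of_eq (by rw [hlen]))
    · refine le_iInf fun p => ?_
      obtain ⟨q, hq, hlen, -⟩ := LengthSubdiv.exists_lift hr W.pos p.1 p.2
      exact iInf_le_of_le ⟨q, hq⟩ (le_of_eq (by rw [hlen]))
end

section
/- Let ℓ and k be positive real numbers, let G be a finite simple graph, let φ : E(G) → (0,ℓ], and let x,y ∈ V(G). If the distance in (G,φ) between x and y is at most k, then the (unit-length) graph distance in (G,φ)^ℓ between x and y is at most ⌈2k/ℓ⌉. -/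
open scoped ENNReal

section Helpers
open SimpleGraph

lemma walkLen_nil {V : Type} {G : SimpleGraph V} (w : Sym2 V → ℝ) {x : V} :
    walkLen w (Walk.nil : G.Walk x x) = 0 := by simp [walkLen]

lemma walkLen_cons {V : Type} {G : SimpleGraph V} (w : Sym2 V → ℝ) {x y z : V}
    (h : G.Adj x y) (p : G.Walk y z) :
    walkLen w (Walk.cons h p) = w s(x, y) + walkLen w p := by simp [walkLen]

lemma walkLen_append {V : Type} {G : SimpleGraph V} (w : Sym2 V → ℝ) {x y z : V}
    (p : G.Walk x y) (q : G.Walk y z) :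
    walkLen w (p.append q) = walkLen w p + walkLen w q := by
  simp [walkLen, Walk.edges_append]

lemma walkLen_nonneg {V : Type} {G : SimpleGraph V} (w : Sym2 V → ℝ)
    (hpos : ∀ e ∈ G.edgeSet, 0 < w e) {x y : V} (p : G.Walk x y) : 0 ≤ walkLen w p := by
  refine List.sum_nonneg fun a ha => ?_
  obtain ⟨e, he, rfl⟩ := List.mem_map.1 ha
  exact (hpos e (p.edges_subset_edgeSet he)).le

lemma split_walk {V : Type} {G : SimpleGraph V} (w : Sym2 V → ℝ) {x y : V} (p : G.Walk x y) :
    ∀ r : ℝ, 0 ≤ r →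
    walkLen w p ≤ r ∨ ∃ (z z' : V) (p₁ : G.Walk x z) (p₂ : G.Walk z' y) (e : G.Adj z z'),
      p = p₁.append (Walk.cons e p₂) ∧ walkLen w p₁ ≤ r ∧ r < walkLen w p₁ + w s(z, z') := by
  induction p with
  | nil => intro r hr; left; simpa [walkLen] using hr
  | @cons a b c h p ih =>
    intro r hr
    by_cases hw : w s(a, b) ≤ r
    · rcases ih (r - w s(a, b)) (by linarith) with h1 | ⟨z, z', p₁, p₂, e, heq, h2, h3⟩
      · left; rw [walkLen_cons]; linarith
      · right
        refine ⟨z, z', Walk.cons h p₁, p₂, e, ?_, ?_, ?_⟩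
        · rw [heq]; rfl
        · rw [walkLen_cons]; linarith
        · rw [walkLen_cons]; linarith
    · right
      refine ⟨a, b, Walk.nil, p, h, by simp, ?_, ?_⟩
      · rw [walkLen_nil]; exact hr
      · rw [walkLen_nil]; linarith

lemma walkLen_pos {V : Type} {G : SimpleGraph V} (w : Sym2 V → ℝ)
    (hpos : ∀ e ∈ G.edgeSet, 0 < w e) {x y : V} (p : G.Walk x y) (hne : p.length ≠ 0) :
    0 < walkLen w p := by
  cases p with
  | nil => simp at hne
  | cons h p =>
    rw [walkLen_cons]
    have h1 := hpos _ (G.mem_edgeSet.2 h)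
    have h2 := walkLen_nonneg w hpos p
    linarith

lemma wDist_le' {V : Type} (G : SimpleGraph V) (w : Sym2 V → ℝ) {x y : V}
    (p : G.Walk x y) (hp : p.IsPath) : wDist G w x y ≤ ENNReal.ofReal (walkLen w p) :=
  iInf_le _ (⟨p, hp⟩ : {q : G.Walk x y // q.IsPath})

lemma key_dop (ℓ : ℝ) (hℓ : 0 < ℓ) {V : Type} (G : SimpleGraph V) (w : Sym2 V → ℝ)
    (hpos : ∀ e ∈ G.edgeSet, 0 < w e) (hb : ∀ e ∈ G.edgeSet, w e ≤ ℓ) :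
    ∀ (n : ℕ) (x y : V) (p : G.Walk x y), p.length ≤ n → p.IsPath →
      ∃ q : (powerGraph G w ℓ).Walk x y, q.length ≤ ⌈2 * walkLen w p / ℓ⌉₊ := by
  intro n
  induction n with
  | zero =>
    intro x y p hlen hp
    obtain rfl := Walk.eq_of_length_eq_zero (Nat.le_zero.mp hlen)
    exact ⟨Walk.nil, by simp⟩
  | succ n ih =>
    intro x y p hlen hp
    by_cases hnil : p.length = 0
    · obtain rfl := Walk.eq_of_length_eq_zero hnil
      exact ⟨Walk.nil, by simp⟩
    have hLpos : 0 < walkLen w p := walkLen_pos w hpos p hnil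
    rcases split_walk w p ℓ hℓ.le with h1 | ⟨z, z', p₁, p₂, e, heq, h2, h3⟩
    · have hxy : x ≠ y := by
        rintro rfl
        rw [Walk.isPath_iff_eq_nil.1 hp] at hnil
        simp at hnil
      have hadj : (powerGraph G w ℓ).Adj x y :=
        ⟨hxy, le_trans (wDist_le' G w p hp) (ENNReal.ofReal_le_ofReal h1)⟩
      refine ⟨Walk.cons hadj Walk.nil, ?_⟩
      simp only [Walk.length_cons, Walk.length_nil, zero_add]
      rw [Nat.one_le_ceil_iff]
      positivity
    · have heb : w s(z, z') ≤ ℓ := hb _ (G.mem_edgeSet.2 e)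
      subst heq
      have hp₁ : p₁.IsPath := hp.of_append_left
      have hc : (Walk.cons e p₂).IsPath := hp.of_append_right
      have hp₂ : p₂.IsPath := hc.of_cons
      have hxz : x ≠ z := by
        rintro rfl
        rw [Walk.isPath_iff_eq_nil.1 hp₁, walkLen_nil] at h3
        linarith
      have hadj1 : (powerGraph G w ℓ).Adj x z :=
        ⟨hxz, le_trans (wDist_le' G w p₁ hp₁) (ENNReal.ofReal_le_ofReal h2)⟩
      have hadj2 : (powerGraph G w ℓ).Adj z z' := by
        refine ⟨e.ne, ?_⟩
        have : wDist G w z z' ≤ ENNReal.ofReal (walkLen w (Walk.cons e Walk.nil)) :=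
          wDist_le' G w _ (by simp [e.ne])
        refine le_trans this (ENNReal.ofReal_le_ofReal ?_)
        rw [walkLen_cons, walkLen_nil]
        linarith
      have hlen₂ : p₂.length ≤ n := by
        rw [Walk.length_append, Walk.length_cons] at hlen
        omega
      obtain ⟨q₂, hq₂⟩ := ih z' y p₂ hlen₂ hp₂
      refine ⟨Walk.cons hadj1 (Walk.cons hadj2 q₂), ?_⟩
      simp only [Walk.length_cons]
      have hnn : 0 ≤ 2 * walkLen w p₂ / ℓ :=
        div_nonneg (by linarith [walkLen_nonneg w hpos p₂]) hℓ.le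
      have hL : walkLen w (p₁.append (Walk.cons e p₂))
          = walkLen w p₁ + w s(z, z') + walkLen w p₂ := by
        rw [walkLen_append, walkLen_cons]; ring
      have hstep : 2 * walkLen w p₂ / ℓ + 2 ≤ 2 * walkLen w (p₁.append (Walk.cons e p₂)) / ℓ := by
        rw [hL, div_add' _ _ _ hℓ.ne', div_le_div_iff₀ hℓ hℓ]
        nlinarith
      calc q₂.length + 1 + 1 ≤ ⌈2 * walkLen w p₂ / ℓ⌉₊ + 2 := by omega
        _ = ⌈2 * walkLen w p₂ / ℓ + (2 : ℕ)⌉₊ := (Nat.ceil_add_natCast hnn 2).symm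
        _ ≤ _ := Nat.ceil_le_ceil (by push_cast; linarith)

end Helpers

/-- Theorem (Lemma `dist_original_power`): if all weights of `(G,φ)` lie in `(0,ℓ]` and the
distance in `(G,φ)` between `x` and `y` is at most `k`, then the graph distance in `(G,φ)^ℓ`
between `x` and `y` is at most `⌈2k/ℓ⌉`. -/
theorem dist_original_power (ℓ k : ℝ) (hℓ : 0 < ℓ) (hk : 0 < k) (W : WGraph)
    (hb : W.IsBounded ℓ) (x y : W.V)
    (hd : wDist W.G W.w x y ≤ ENNReal.ofReal k) :
    hopDist (powerGraph W.G W.w ℓ) x y ≤ (⌈2 * k / ℓ⌉₊ : ℝ≥0∞) := by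
  haveI := W.fin
  classical
  have hne : Nonempty {q : W.G.Walk x y // q.IsPath} := by
    by_contra h
    rw [not_nonempty_iff] at h
    rw [wDist, iInf_of_empty] at hd
    exact ENNReal.ofReal_ne_top (top_le_iff.mp hd)
  haveI : Fintype W.V := Fintype.ofFinite _
  obtain ⟨⟨p, hp⟩, hmin⟩ := Finite.exists_min
    (fun q : {q : W.G.Walk x y // q.IsPath} => ENNReal.ofReal (walkLen W.w q.1))
  have hle : ENNReal.ofReal (walkLen W.w p) ≤ ENNReal.ofReal k :=
    le_trans (le_iInf hmin) hd
  have hks : walkLen W.w p ≤ k := (ENNReal.ofReal_le_ofReal_iff hk.le).1 hle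
  obtain ⟨q, hq⟩ := key_dop ℓ hℓ W.G W.w W.pos hb p.length x y p le_rfl hp
  refine le_trans (iInf_le _ q) ?_
  have : q.length ≤ ⌈2 * k / ℓ⌉₊ := by
    refine hq.trans (Nat.ceil_le_ceil ?_)
    gcongr
  exact_mod_cast this
end
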